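/- Let ω₁, ω₂ be complex numbers that are linearly independent over ℝ (equivalently, ω₂/ω₁ is not real). Let f, g : ℂ → ℂ be functions that are meromorphic on all of ℂ and doubly periodic with respect to the lattice Λ = ℤω₁ + ℤω₂, i.e. f(z+ω₁)=f(z), f(z+ω₂)=f(z), g(z+ω₁)=g(z), g(z+ω₂)=g(z) for all z ∈ ℂ. Then f and g are algebraically dependent: there exists a nonzero polynomial Q in two variables with complex coefficients such that Q(f(u), g(u)) = 0 for every u ∈ ℂ at which both f and g are analytic. -/

import Mathlib

open Filter Metric Set Complex
open scoped Topology Real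

section EllipticHelpers

lemma merom_nonanalytic_finite {F : ℂ → ℂ} (hF : MeromorphicOn F Set.univ)
    {K : Set ℂ} (hK : IsCompact K) :
    ({x | ¬ AnalyticAt ℂ F x} ∩ K).Finite := by
  by_contra hinf
  replace hinf : ({x | ¬ AnalyticAt ℂ F x} ∩ K).Infinite := hinf
  obtain ⟨x, -, hacc⟩ := hinf.exists_accPt_of_subset_isCompact hK Set.inter_subset_right
  have h1 : ∀ᶠ y in 𝓝[≠] x, AnalyticAt ℂ F y := (hF x trivial).eventually_analyticAt
  have h2 : ∃ᶠ y in 𝓝 x, y ≠ x ∧ y ∈ ({x | ¬ AnalyticAt ℂ F x} ∩ K) :=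
    (accPt_iff_frequently (x := x)).mp hacc
  rw [eventually_nhdsWithin_iff] at h1
  exact ((h2.and_eventually h1).exists).elim (fun y hy => hy.1.2.1 (hy.2 hy.1.1))


/-- closed fundamental parallelogram -/
def fundPar (ω₁ ω₂ : ℂ) : Set ℂ :=
  (fun p : ℝ × ℝ => p.1 • ω₁ + p.2 • ω₂) '' (Icc (0:ℝ) 1 ×ˢ Icc (0:ℝ) 1)

lemma fundPar_isCompact (ω₁ ω₂ : ℂ) : IsCompact (fundPar ω₁ ω₂) :=
  ((isCompact_Icc.prod isCompact_Icc).image (by fun_prop))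

lemma exists_rep (ω₁ ω₂ : ℂ) (hω : LinearIndependent ℝ ![ω₁, ω₂]) (z : ℂ) :
    ∃ w ∈ fundPar ω₁ ω₂, ∃ m n : ℤ, z = w + ((m : ℂ) * ω₁ + (n : ℂ) * ω₂) := by
  have hcard : Fintype.card (Fin 2) = Module.finrank ℝ ℂ := by
    simp [Complex.finrank_real_complex]
  set B := basisOfLinearIndependentOfCardEqFinrank hω hcard with hB
  have hB0 : B 0 = ω₁ := by rw [hB, coe_basisOfLinearIndependentOfCardEqFinrank]; rfl
  have hB1 : B 1 = ω₂ := by rw [hB, coe_basisOfLinearIndependentOfCardEqFinrank]; rfl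
  have hrepr : z = B.repr z 0 • ω₁ + B.repr z 1 • ω₂ := by
    have := B.sum_repr z
    rw [Fin.sum_univ_two, hB0, hB1] at this
    exact this.symm
  set a := B.repr z 0
  set b := B.repr z 1
  refine ⟨Int.fract a • ω₁ + Int.fract b • ω₂, ⟨⟨Int.fract a, Int.fract b⟩,
    ⟨⟨(Int.fract_nonneg a), (Int.fract_lt_one a).le⟩,
      ⟨(Int.fract_nonneg b), (Int.fract_lt_one b).le⟩⟩, rfl⟩, ⌊a⌋, ⌊b⌋, ?_⟩
  rw [hrepr]
  have ha : a = Int.fract a + (⌊a⌋ : ℝ) := by rw [Int.fract]; ring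
  have hb : b = Int.fract b + (⌊b⌋ : ℝ) := by rw [Int.fract]; ring
  calc a • ω₁ + b • ω₂ = (Int.fract a + (⌊a⌋:ℝ)) • ω₁ + (Int.fract b + (⌊b⌋:ℝ)) • ω₂ := by
        rw [← ha, ← hb]
    _ = _ := by
        simp only [add_smul, Complex.real_smul]
        push_cast
        ring

lemma zperiodic {h : ℂ → ℂ} {ω₁ ω₂ : ℂ}
    (h₁ : ∀ z, h (z + ω₁) = h z) (h₂ : ∀ z, h (z + ω₂) = h z) (m n : ℤ) (z : ℂ) :
    h (z + ((m : ℂ) * ω₁ + (n : ℂ) * ω₂)) = h z := by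
  have p1 : Function.Periodic h ω₁ := h₁
  have p2 : Function.Periodic h ω₂ := h₂
  have q1 := p1.int_mul m
  have q2 := p2.int_mul n
  calc h (z + ((m : ℂ) * ω₁ + (n : ℂ) * ω₂)) = h ((z + (n:ℂ) * ω₂) + (m:ℂ) * ω₁) := by ring_nf
    _ = h (z + (n:ℂ) * ω₂) := q1 _
    _ = h z := q2 _

lemma limUnder_punctured_eq {h ψ : ℂ → ℂ} {z : ℂ} (hψ : AnalyticAt ℂ ψ z)
    (heq : h =ᶠ[𝓝[≠] z] ψ) : limUnder (𝓝[≠] z) h = ψ z := by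
  have ht : Tendsto ψ (𝓝[≠] z) (𝓝 (ψ z)) :=
    (hψ.continuousAt.continuousWithinAt).tendsto
  exact (ht.congr' heq.symm).limUnder_eq

lemma pseudoLiouville {h : ℂ → ℂ} {ω₁ ω₂ : ℂ} (hω : LinearIndependent ℝ ![ω₁, ω₂])
    (h₁ : ∀ z, h (z + ω₁) = h z) (h₂ : ∀ z, h (z + ω₂) = h z)
    (hloc : ∀ z : ℂ, ∃ ψ : ℂ → ℂ, AnalyticAt ℂ ψ z ∧ h =ᶠ[𝓝[≠] z] ψ) :
    ∀ u v : ℂ, AnalyticAt ℂ h u → AnalyticAt ℂ h v → h u = h v := by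
  set H : ℂ → ℂ := fun z => limUnder (𝓝[≠] z) h with hH
  -- H is analytic everywhere
  have hHan : ∀ z : ℂ, AnalyticAt ℂ H z ∧ ∀ ψ : ℂ → ℂ, AnalyticAt ℂ ψ z → h =ᶠ[𝓝[≠] z] ψ →
      H z = ψ z := by
    intro z
    obtain ⟨ψ, hψan, hψeq⟩ := hloc z
    have key : ∀ ψ' : ℂ → ℂ, AnalyticAt ℂ ψ' z → h =ᶠ[𝓝[≠] z] ψ' → H z = ψ' z := by
      intro ψ' a b; exact limUnder_punctured_eq a b
    refine ⟨?_, key⟩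
    have e1 : ∀ᶠ y in 𝓝 z, ∀ᶠ x in 𝓝 y, x ≠ z → h x = ψ x := by
      rw [eventually_eventually_nhds]
      rw [EventuallyEq, eventually_nhdsWithin_iff] at hψeq
      exact hψeq.mono (fun x hx hxz => hx hxz)
    have e2 : ∀ᶠ y in 𝓝 z, AnalyticAt ℂ ψ y := hψan.eventually_analyticAt
    have e3 : H =ᶠ[𝓝 z] ψ := by
      filter_upwards [e1, e2] with y hy1 hy2
      rcases eq_or_ne y z with rfl | hyz
      · exact key ψ hy2 hψeq
      · have : h =ᶠ[𝓝[≠] y] ψ := by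
          have : ∀ᶠ x in 𝓝 y, h x = ψ x := by
            filter_upwards [hy1, eventually_ne_nhds hyz] with x hx1 hx2
            exact hx1 hx2
          exact this.filter_mono nhdsWithin_le_nhds
        exact limUnder_punctured_eq hy2 this
    exact hψan.congr e3.symm
  -- H = h at analyticity points of h
  have hHh : ∀ u : ℂ, AnalyticAt ℂ h u → H u = h u := fun u hu =>
    (hHan u).2 h hu EventuallyEq.rfl
  -- H is periodic
  have hper : ∀ ω : ℂ, (∀ z, h (z + ω) = h z) → ∀ z, H (z + ω) = H z := by
    intro ω hω' z
    obtain ⟨ψ, hψan, hψeq⟩ := hloc (z + ω)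
    have hval : H (z + ω) = ψ (z + ω) := (hHan (z + ω)).2 ψ hψan hψeq
    have htend : Tendsto h (𝓝[≠] (z + ω)) (𝓝 (H (z + ω))) := by
      rw [hval]
      exact (hψan.continuousAt.continuousWithinAt.tendsto).congr' hψeq.symm
    have hmap : Tendsto (fun y => y + ω) (𝓝[≠] z) (𝓝[≠] (z + ω)) := by
      rw [tendsto_nhdsWithin_iff]
      constructor
      · exact (continuous_add_right ω).continuousAt.tendsto.mono_left nhdsWithin_le_nhds
      · filter_upwards [self_mem_nhdsWithin] with y hy
        exact fun hc => hy (by simpa using (add_left_injective ω hc))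
    have : Tendsto (fun y => h (y + ω)) (𝓝[≠] z) (𝓝 (H (z + ω))) := htend.comp hmap
    have h2 : Tendsto h (𝓝[≠] z) (𝓝 (H (z + ω))) := by
      simpa only [hω'] using this
    exact (h2.limUnder_eq).symm ▸ rfl
  -- conclude via Liouville
  have hHper : ∀ (m n : ℤ) (z : ℂ), H (z + ((m:ℂ) * ω₁ + (n:ℂ) * ω₂)) = H z :=
    fun m n z => zperiodic (hper ω₁ h₁) (hper ω₂ h₂) m n z
  have hHdiff : Differentiable ℂ H := fun z => ((hHan z).1).differentiableAt
  have hrange : range H ⊆ H '' fundPar ω₁ ω₂ := by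
    rintro - ⟨z, rfl⟩
    obtain ⟨w, hw, m, n, rfl⟩ := exists_rep ω₁ ω₂ hω z
    exact ⟨w, hw, (hHper m n w).symm⟩
  have hbd : Bornology.IsBounded (range H) :=
    (((fundPar_isCompact ω₁ ω₂).image hHdiff.continuous).isBounded).subset hrange
  intro u v hu hv
  rw [← hHh u hu, ← hHh v hv]
  exact hHdiff.apply_eq_apply_of_bounded hbd u v

lemma removable_of_integrals_vanish {h : ℂ → ℂ} {p : ℂ} {r : ℝ} {N : ℕ}
    (hr : 0 < r)
    (hmero : MeromorphicAt h p)
    (hpunct : ∀ z ∈ closedBall p r \ {p}, AnalyticAt ℂ h z)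
    (hbound : ∀ n : ℤ, meromorphicOrderAt h p = n → -(N : ℤ) ≤ n)
    (hint : ∀ k : ℕ, k < N → (∮ z in C(p, r), (z - p) ^ k * h z) = 0) :
    ∃ ψ : ℂ → ℂ, AnalyticAt ℂ ψ p ∧ h =ᶠ[𝓝[≠] p] ψ := by
  rcases eq_or_ne (meromorphicOrderAt h p) ⊤ with htop | hne
  · exact ⟨0, analyticAt_const, by
      exact (meromorphicOrderAt_eq_top_iff.mp htop)⟩
  obtain ⟨n, hn⟩ := Option.ne_none_iff_exists'.mp hne
  obtain ⟨g, hg_an, hg_ne, hg_eq⟩ := (meromorphicOrderAt_eq_int_iff (n := n) hmero).mp hn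
  rcases le_or_gt 0 n with hn0 | hn0
  · refine ⟨fun z => (z - p) ^ n.toNat * g z,
      ((analyticAt_id.sub analyticAt_const).pow _).mul hg_an, ?_⟩
    filter_upwards [hg_eq] with z hz
    rw [hz, smul_eq_mul, ← zpow_natCast, Int.toNat_of_nonneg hn0]
  · -- order negative : derive a contradiction
    exfalso
    set m : ℕ := (-n).toNat with hm
    have hmn : (m : ℤ) = -n := Int.toNat_of_nonneg (by omega)
    have hm1 : 1 ≤ m := by omega
    have hmN : m ≤ N := by
      have := hbound n hn; omega
    set G : ℂ → ℂ := fun z => if z = p then g p else (z - p) ^ m * h z with hG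
    have hGz : ∀ z, z ≠ p → G z = (z - p) ^ m * h z := fun z hz => if_neg hz
    have hGp : G p = g p := if_pos rfl
    have hg_eq' := eventually_nhdsWithin_iff.mp hg_eq
    have hGg : G =ᶠ[𝓝 p] g := by
      filter_upwards [hg_eq'] with z hz
      rcases eq_or_ne z p with rfl | hzp
      · exact hGp
      · have hz' := hz hzp
        rw [smul_eq_mul] at hz'
        have hsub : (z - p) ≠ 0 := sub_ne_zero.mpr hzp
        rw [hGz z hzp, hz', ← mul_assoc, ← zpow_natCast (z - p) m, hmn, ← zpow_add₀ hsub]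
        simp
    have hGan : AnalyticOnNhd ℂ G (closedBall p r) := by
      intro q hq
      rcases eq_or_ne q p with rfl | hqp
      · exact hg_an.congr hGg.symm
      · have hhq : AnalyticAt ℂ h q := hpunct q ⟨hq, hqp⟩
        have han : AnalyticAt ℂ (fun z => (z - p) ^ m * h z) q :=
          ((analyticAt_id.sub analyticAt_const).pow _).mul hhq
        refine han.congr ?_
        filter_upwards [eventually_ne_nhds hqp] with z hz
        exact (hGz z hz).symm
    have hcauchy : (∮ z in C(p, r), (z - p)⁻¹ • G z) = (2 * π * I : ℂ) • G p :=
      (hGan.differentiableOn).circleIntegral_sub_inv_smul (mem_ball_self hr)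
    have heqon : EqOn (fun z => (z - p)⁻¹ • G z) (fun z => (z - p) ^ (m - 1) * h z)
        (sphere p r) := by
      intro z hz
      have hzp : z ≠ p := by
        intro hc
        rw [hc, mem_sphere, dist_self] at hz
        exact hr.ne' hz.symm
      have hsub : (z - p) ≠ 0 := sub_ne_zero.mpr hzp
      show (z - p)⁻¹ • G z = (z - p) ^ (m - 1) * h z
      rw [smul_eq_mul, hGz z hzp, show m = (m - 1) + 1 from by omega, pow_succ]
      field_simp
      rw [Nat.add_sub_cancel]
      ring
    have hzero : (∮ z in C(p, r), (z - p)⁻¹ • G z) = 0 := by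
      rw [circleIntegral.integral_congr hr.le heqon]
      exact hint (m - 1) (by omega)
    rw [hzero] at hcauchy
    have h2pi : (2 * π * I : ℂ) ≠ 0 := by
      simp [Real.pi_ne_zero, I_ne_zero]
    have hGp0 : G p = 0 := by
      have hc := hcauchy.symm
      rw [smul_eq_mul] at hc
      exact (mul_eq_zero.mp hc).resolve_left h2pi
    exact hg_ne (hGp ▸ hGp0)

lemma circleIntegral_finset_sum {ι : Type*} (s : Finset ι) (F : ι → ℂ → ℂ) (c : ℂ) (R : ℝ)
    (h : ∀ i ∈ s, CircleIntegrable (F i) c R) :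
    (∮ z in C(c, R), ∑ i ∈ s, F i z) = ∑ i ∈ s, ∮ z in C(c, R), F i z := by
  simp only [circleIntegral, Finset.smul_sum]
  exact intervalIntegral.integral_finset_sum (fun i hi => (h i hi).out)

lemma order_ge_of_analytic_mul {h : ℂ → ℂ} {p : ℂ} {N : ℕ} (hmero : MeromorphicAt h p)
    (hphi : AnalyticAt ℂ (fun z => (z - p) ^ N * h z) p) :
    ∀ n : ℤ, meromorphicOrderAt h p = n → -(N : ℤ) ≤ n := by
  intro n hn
  by_contra hlt
  push_neg at hlt
  obtain ⟨g, hg_an, hg_ne, hg_eq⟩ := (meromorphicOrderAt_eq_int_iff (n := n) hmero).mp hn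
  set k : ℕ := (-(N + n)).toNat with hk
  have hkval : (k : ℤ) = -(N : ℤ) - n := by omega
  have hk1 : 1 ≤ k := by omega
  have hev : g =ᶠ[𝓝[≠] p] fun z => (z - p) ^ k * ((z - p) ^ N * h z) := by
    have hg_eq' := eventually_nhdsWithin_iff.mp hg_eq
    rw [EventuallyEq, eventually_nhdsWithin_iff]
    filter_upwards [hg_eq'] with z hz hzp
    have hz' := hz hzp
    rw [smul_eq_mul] at hz'
    have hsub : (z - p) ≠ 0 := sub_ne_zero.mpr (by simpa using hzp)
    rw [hz']
    have hsum : (k : ℤ) + N + n = 0 := by omega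
    calc g z = (z - p) ^ ((k:ℤ) + N + n) * g z := by rw [hsum, zpow_zero, one_mul]
      _ = ((z - p) ^ (k:ℤ) * (z - p) ^ (N:ℤ) * (z - p) ^ n) * g z := by
          rw [← zpow_add₀ hsub, ← zpow_add₀ hsub]
      _ = (z - p) ^ k * ((z - p) ^ N * ((z - p) ^ n * g z)) := by
          rw [zpow_natCast, zpow_natCast]; ring
  have t1 : Tendsto g (𝓝[≠] p) (𝓝 (g p)) := hg_an.continuousAt.continuousWithinAt
  have t2 : Tendsto (fun z => (z - p) ^ k * ((z - p) ^ N * h z)) (𝓝[≠] p) (𝓝 0) := by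
    have hc : ContinuousAt (fun z => (z - p) ^ k * ((z - p) ^ N * h z)) p :=
      (((continuous_id.sub continuous_const).pow k).continuousAt).mul hphi.continuousAt
    have hval : (fun z => (z - p) ^ k * ((z - p) ^ N * h z)) p = 0 := by
      simp [zero_pow (by omega : k ≠ 0)]
    exact hval ▸ hc.continuousWithinAt
  exact hg_ne (tendsto_nhds_unique (Filter.Tendsto.congr' hev t1) t2)

lemma poly_of_coeffs {d : ℕ} (c : Fin (d+1) × Fin (d+1) → ℂ) (hc : c ≠ 0) :
    ∃ Q : MvPolynomial (Fin 2) ℂ, Q ≠ 0 ∧ ∀ v : Fin 2 → ℂ,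
      MvPolynomial.eval v Q
        = ∑ q : Fin (d+1) × Fin (d+1), c q * (v 0 ^ (q.1 : ℕ) * v 1 ^ (q.2 : ℕ)) := by
  classical
  set D : Fin (d+1) × Fin (d+1) → (Fin 2 →₀ ℕ) :=
    fun q => Finsupp.single 0 (q.1 : ℕ) + Finsupp.single 1 (q.2 : ℕ) with hD
  have hD0 : ∀ q, D q 0 = (q.1 : ℕ) := by
    intro q; simp [hD, Finsupp.single_apply]
  have hD1 : ∀ q, D q 1 = (q.2 : ℕ) := by
    intro q; simp [hD, Finsupp.single_apply]
  have hDinj : Function.Injective D := by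
    intro q q' hqq
    have h0 : (q.1 : ℕ) = (q'.1 : ℕ) := by rw [← hD0 q, ← hD0 q', hqq]
    have h1 : (q.2 : ℕ) = (q'.2 : ℕ) := by rw [← hD1 q, ← hD1 q', hqq]
    exact Prod.ext (Fin.val_injective h0) (Fin.val_injective h1)
  refine ⟨∑ q : Fin (d+1) × Fin (d+1), MvPolynomial.monomial (D q) (c q), ?_, ?_⟩
  · intro h0
    obtain ⟨q₀, hq₀⟩ := Function.ne_iff.mp hc
    have hcoeff := congrArg (MvPolynomial.coeff (D q₀)) h0
    rw [MvPolynomial.coeff_sum] at hcoeff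
    simp only [MvPolynomial.coeff_monomial, MvPolynomial.coeff_zero] at hcoeff
    rw [Finset.sum_eq_single q₀] at hcoeff
    · rw [if_pos rfl] at hcoeff; exact hq₀ hcoeff
    · intro q _ hq
      rw [if_neg (fun hcon => hq (hDinj hcon))]
    · intro hq; exact absurd (Finset.mem_univ q₀) hq
  · intro v
    rw [map_sum]
    refine Finset.sum_congr rfl (fun q _ => ?_)
    rw [MvPolynomial.eval_monomial]
    congr 1
    rw [Finsupp.prod_fintype _ _ (fun i => pow_zero (v i)), Fin.prod_univ_two, hD0, hD1]

end EllipticHelpers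

lemma meromorphicAt_finset_sum {ι : Type*} (s : Finset ι) (F : ι → ℂ → ℂ) {x : ℂ}
    (h : ∀ i ∈ s, MeromorphicAt (F i) x) :
    MeromorphicAt (fun z => ∑ i ∈ s, F i z) x := by
  classical
  induction s using Finset.induction_on with
  | empty => simpa using MeromorphicAt.const 0 x
  | insert _ _ hnotmem ih =>
    rename_i a s'
    simp only [Finset.sum_insert hnotmem]
    exact (h a (Finset.mem_insert_self a s')).add
      (ih (fun i hi => h i (Finset.mem_insert_of_mem hi)))

/-- Weierstrass–Thimm–Siegel theorem, case n = 1 (elliptic functions):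
any two meromorphic functions on ℂ, doubly periodic with respect to a
common lattice ℤω₁ + ℤω₂ (with ω₁, ω₂ linearly independent over ℝ), are
algebraically dependent. -/
theorem elliptic_two_functions_algebraically_dependent
    (ω₁ ω₂ : ℂ) (hω : LinearIndependent ℝ ![ω₁, ω₂])
    (f g : ℂ → ℂ)
    (hf : MeromorphicOn f Set.univ) (hg : MeromorphicOn g Set.univ)
    (hf₁ : ∀ z : ℂ, f (z + ω₁) = f z) (hf₂ : ∀ z : ℂ, f (z + ω₂) = f z)
    (hg₁ : ∀ z : ℂ, g (z + ω₁) = g z) (hg₂ : ∀ z : ℂ, g (z + ω₂) = g z) :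
    ∃ Q : MvPolynomial (Fin 2) ℂ, Q ≠ 0 ∧
      ∀ u : ℂ, AnalyticAt ℂ f u → AnalyticAt ℂ g u →
        MvPolynomial.eval ![f u, g u] Q = 0 := by
  classical
  -- a base point where both are analytic
  obtain ⟨z₀, hz₀f, hz₀g⟩ :=
    (((hf 0 trivial).eventually_analyticAt).and ((hg 0 trivial).eventually_analyticAt)).exists
  -- the finite set of bad points in the fundamental parallelogram
  have hSfin : (({x | ¬ AnalyticAt ℂ f x} ∪ {x | ¬ AnalyticAt ℂ g x}) ∩ fundPar ω₁ ω₂).Finite := by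
    refine ((merom_nonanalytic_finite hf (fundPar_isCompact ω₁ ω₂)).union
      (merom_nonanalytic_finite hg (fundPar_isCompact ω₁ ω₂))).subset ?_
    rintro x ⟨hx1 | hx1, hx2⟩
    · exact Or.inl ⟨hx1, hx2⟩
    · exact Or.inr ⟨hx1, hx2⟩
  set S : Finset ℂ := hSfin.toFinset with hS
  -- local data at every point
  have key : ∀ p : ℂ, ∃ (M : ℕ) (r : ℝ), 0 < r ∧
      (∀ z ∈ closedBall p r \ {p}, AnalyticAt ℂ f z ∧ AnalyticAt ℂ g z) ∧
      AnalyticAt ℂ (fun z => (z - p) ^ M * f z) p ∧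
      AnalyticAt ℂ (fun z => (z - p) ^ M * g z) p := by
    intro p
    obtain ⟨mf, hmf⟩ := hf p trivial
    obtain ⟨mg, hmg⟩ := hg p trivial
    have hev : ∀ᶠ y in 𝓝[≠] p, AnalyticAt ℂ f y ∧ AnalyticAt ℂ g y :=
      ((hf p trivial).eventually_analyticAt).and ((hg p trivial).eventually_analyticAt)
    rw [eventually_nhdsWithin_iff] at hev
    obtain ⟨ε, hε, hball⟩ := Metric.eventually_nhds_iff.mp hev
    refine ⟨max mf mg, ε / 2, by positivity, ?_, ?_, ?_⟩
    · intro z hz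
      refine hball (lt_of_le_of_lt hz.1 (by linarith)) ?_
      simpa using hz.2
    · have : AnalyticAt ℂ (fun z => (z - p) ^ (max mf mg - mf) * ((z - p) ^ mf • f z)) p :=
        ((analyticAt_id.sub analyticAt_const).pow _).mul hmf
      refine this.congr (Eventually.of_forall fun z => ?_)
      simp only [smul_eq_mul, ← mul_assoc, ← pow_add]
      rw [Nat.sub_add_cancel (le_max_left _ _)]
    · have : AnalyticAt ℂ (fun z => (z - p) ^ (max mf mg - mg) * ((z - p) ^ mg • g z)) p :=
        ((analyticAt_id.sub analyticAt_const).pow _).mul hmg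
      refine this.congr (Eventually.of_forall fun z => ?_)
      simp only [smul_eq_mul, ← mul_assoc, ← pow_add]
      rw [Nat.sub_add_cancel (le_max_right _ _)]
  choose M rad hrpos hrad hMf hMg using key
  set Mm : ℕ := S.sup M with hMm
  have hMle : ∀ p ∈ S, M p ≤ Mm := fun p hp => Finset.le_sup hp
  -- analyticity of (z-p)^Mm * f at p for p ∈ S
  have hMmf : ∀ p : ℂ, p ∈ S → AnalyticAt ℂ (fun z => (z - p) ^ Mm * f z) p := by
    intro p hp
    have : AnalyticAt ℂ (fun z => (z - p) ^ (Mm - M p) * ((z - p) ^ (M p) * f z)) p :=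
      ((analyticAt_id.sub analyticAt_const).pow _).mul (hMf p)
    refine this.congr (Eventually.of_forall fun z => ?_)
    simp only [← mul_assoc, ← pow_add]
    rw [Nat.sub_add_cancel (hMle p hp)]
  have hMmg : ∀ p : ℂ, p ∈ S → AnalyticAt ℂ (fun z => (z - p) ^ Mm * g z) p := by
    intro p hp
    have : AnalyticAt ℂ (fun z => (z - p) ^ (Mm - M p) * ((z - p) ^ (M p) * g z)) p :=
      ((analyticAt_id.sub analyticAt_const).pow _).mul (hMg p)
    refine this.congr (Eventually.of_forall fun z => ?_)
    simp only [← mul_assoc, ← pow_add]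
    rw [Nat.sub_add_cancel (hMle p hp)]
  set d : ℕ := 2 * Mm * S.card + 1 with hd
  set N : ℕ := 2 * d * Mm with hN
  -- analyticity of (z-p)^N * monomial at p ∈ S
  have hmono : ∀ p : ℂ, p ∈ S → ∀ i j : ℕ, i ≤ d → j ≤ d →
      AnalyticAt ℂ (fun z => (z - p) ^ N * (f z ^ i * g z ^ j)) p := by
    intro p hp i j hi hj
    have hle : i * Mm + j * Mm ≤ N := by
      have t1 : i * Mm ≤ d * Mm := Nat.mul_le_mul_right _ hi
      have t2 : j * Mm ≤ d * Mm := Nat.mul_le_mul_right _ hj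
      have t3 : d * Mm + d * Mm = N := by rw [hN]; ring
      omega
    have h1 : AnalyticAt ℂ (fun z =>
        ((z - p) ^ Mm * f z) ^ i * (((z - p) ^ Mm * g z) ^ j
          * (z - p) ^ (N - (i * Mm + j * Mm)))) p :=
      ((hMmf p hp).pow i).mul (((hMmg p hp).pow j).mul
        ((analyticAt_id.sub analyticAt_const).pow _))
    refine h1.congr (Eventually.of_forall fun z => ?_)
    show ((z - p) ^ Mm * f z) ^ i * (((z - p) ^ Mm * g z) ^ j
        * (z - p) ^ (N - (i * Mm + j * Mm))) = (z - p) ^ N * (f z ^ i * g z ^ j)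
    have hsplit : (z - p) ^ N
        = (z - p) ^ (Mm * i) * ((z - p) ^ (Mm * j) * (z - p) ^ (N - (i * Mm + j * Mm))) := by
      rw [← pow_add, ← pow_add]
      congr 1
      rw [Nat.mul_comm Mm i, Nat.mul_comm Mm j]
      omega
    rw [mul_pow, mul_pow, ← pow_mul, ← pow_mul, hsplit]
    ring
  -- the linear system
  set A : Matrix (({p // p ∈ S} × Fin N) ⊕ Unit) (Fin (d+1) × Fin (d+1)) ℂ :=
    Matrix.of fun row q =>
    Sum.elim
      (fun pk : ({p // p ∈ S}) × Fin N =>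
        ∮ z in C((pk.1 : ℂ), rad pk.1), (z - (pk.1 : ℂ)) ^ (pk.2 : ℕ)
          * (f z ^ (q.1 : ℕ) * g z ^ (q.2 : ℕ)))
      (fun _ => f z₀ ^ (q.1 : ℕ) * g z₀ ^ (q.2 : ℕ)) row with hA
  have hcard : Fintype.card (({p // p ∈ S} × Fin N) ⊕ Unit)
      < Fintype.card (Fin (d+1) × Fin (d+1)) := by
    simp only [Fintype.card_sum, Fintype.card_prod, Fintype.card_coe, Fintype.card_fin,
      Fintype.card_unit]
    rw [hN, hd]
    nlinarith [Nat.zero_le (Mm * S.card), sq_nonneg (2 * Mm * S.card)]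
  have hker : LinearMap.ker A.mulVecLin ≠ ⊥ := by
    apply LinearMap.ker_ne_bot_of_finrank_lt
    rw [Module.finrank_fintype_fun_eq_card, Module.finrank_fintype_fun_eq_card]
    exact hcard
  obtain ⟨c, hcker, hc0⟩ := Submodule.exists_mem_ne_zero_of_ne_bot hker
  have hcmul : A.mulVec c = 0 := hcker
  -- the elliptic function h
  set h : ℂ → ℂ := fun z => ∑ q : Fin (d+1) × Fin (d+1), c q * (f z ^ (q.1 : ℕ) * g z ^ (q.2 : ℕ)) with hh
  have hper1 : ∀ z, h (z + ω₁) = h z := by intro z; simp only [hh, hf₁, hg₁]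
  have hper2 : ∀ z, h (z + ω₂) = h z := by intro z; simp only [hh, hf₂, hg₂]
  have hanal : ∀ u : ℂ, AnalyticAt ℂ f u → AnalyticAt ℂ g u → AnalyticAt ℂ h u := by
    intro u hfu hgu
    exact Finset.analyticAt_fun_sum _ fun q _ =>
      (analyticAt_const.mul ((hfu.pow _).mul (hgu.pow _)))
  have hmero : ∀ x : ℂ, MeromorphicAt h x := by
    intro x
    apply meromorphicAt_finset_sum
    intro q _
    exact (MeromorphicAt.const (c q) x).mul (((hf x trivial).pow _).mul ((hg x trivial).pow _))
  -- circle integrability of the monomials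
  have hsph : ∀ p : ℂ, p ∈ S → ∀ z ∈ sphere p (rad p), z ∈ closedBall p (rad p) \ {p} := by
    intro p hp z hz
    rw [mem_sphere] at hz
    exact ⟨mem_closedBall.mpr hz.le, by
      intro hc
      rw [mem_singleton_iff] at hc
      rw [hc, dist_self] at hz
      exact (hrpos p).ne hz⟩
  have hcint : ∀ p : ℂ, p ∈ S → ∀ (k i j : ℕ) (a : ℂ),
      CircleIntegrable (fun z => a * ((z - p) ^ k * (f z ^ i * g z ^ j))) p (rad p) := by
    intro p hp k i j a
    apply ContinuousOn.circleIntegrable (hrpos p).le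
    intro z hz
    obtain ⟨hfz, hgz⟩ := hrad p z (hsph p hp z hz)
    exact (continuousAt_const.mul ((((continuous_id.sub continuous_const).pow k).continuousAt).mul
      ((hfz.continuousAt.pow _).mul (hgz.continuousAt.pow _)))).continuousWithinAt
  -- vanishing of the circle integrals of h
  have hint : ∀ (p : ℂ) (hp : p ∈ S) (k : ℕ), k < N →
      (∮ z in C(p, rad p), (z - p) ^ k * h z) = 0 := by
    intro p hp k hk
    have hfun : (fun z => (z - p) ^ k * h z)
        = fun z => ∑ q : Fin (d+1) × Fin (d+1),
            c q * ((z - p) ^ k * (f z ^ (q.1 : ℕ) * g z ^ (q.2 : ℕ))) := by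
      funext z
      simp only [hh]
      rw [Finset.mul_sum]
      exact Finset.sum_congr rfl fun q _ => by ring
    calc (∮ z in C(p, rad p), (z - p) ^ k * h z)
        = ∑ q : Fin (d+1) × Fin (d+1), ∮ z in C(p, rad p),
            c q * ((z - p) ^ k * (f z ^ (q.1 : ℕ) * g z ^ (q.2 : ℕ))) := by
          rw [hfun]
          exact circleIntegral_finset_sum _ _ _ _ fun q _ => hcint p hp k _ _ (c q)
      _ = ∑ q : Fin (d+1) × Fin (d+1), A (Sum.inl (⟨p, hp⟩, ⟨k, hk⟩)) q * c q := by
          refine Finset.sum_congr rfl fun q _ => ?_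
          rw [circleIntegral.integral_const_mul, hA]
          simp only [Matrix.of_apply, Sum.elim_inl]
          ring
      _ = A.mulVec c (Sum.inl (⟨p, hp⟩, ⟨k, hk⟩)) := rfl
      _ = 0 := by rw [hcmul]; rfl
  -- h vanishes at z₀
  have hz₀0 : h z₀ = 0 := by
    calc h z₀ = ∑ q : Fin (d+1) × Fin (d+1), A (Sum.inr ()) q * c q := by
          simp only [hh]
          refine Finset.sum_congr rfl fun q _ => ?_
          rw [hA]; simp only [Matrix.of_apply, Sum.elim_inr]; ring
      _ = A.mulVec c (Sum.inr ()) := rfl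
      _ = 0 := by rw [hcmul]; rfl
  -- local removability at every point of the fundamental parallelogram
  have hlocK : ∀ w ∈ fundPar ω₁ ω₂, ∃ ψ : ℂ → ℂ, AnalyticAt ℂ ψ w ∧ h =ᶠ[𝓝[≠] w] ψ := by
    intro w hwK
    by_cases hw : w ∈ S
    · have hphi : AnalyticAt ℂ (fun z => (z - w) ^ N * h z) w := by
        have h1 : AnalyticAt ℂ (fun z => ∑ q : Fin (d+1) × Fin (d+1),
            c q * ((z - w) ^ N * (f z ^ (q.1 : ℕ) * g z ^ (q.2 : ℕ)))) w :=
          Finset.analyticAt_fun_sum _ fun q _ =>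
            analyticAt_const.mul (hmono w hw _ _ (Nat.lt_succ_iff.mp q.1.isLt)
              (Nat.lt_succ_iff.mp q.2.isLt))
        refine h1.congr (Eventually.of_forall fun z => ?_)
        show (∑ q : Fin (d+1) × Fin (d+1),
            c q * ((z - w) ^ N * (f z ^ (q.1 : ℕ) * g z ^ (q.2 : ℕ))))
          = (z - w) ^ N * h z
        simp only [hh]
        rw [Finset.mul_sum]
        exact (Finset.sum_congr rfl fun q _ => by ring).symm
      exact removable_of_integrals_vanish (hrpos w) (hmero w)
        (fun z hz => hanal z (hrad w z hz).1 (hrad w z hz).2)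
        (order_ge_of_analytic_mul (hmero w) hphi)
        (fun k hk => hint w hw k hk)
    · have hwE : AnalyticAt ℂ f w ∧ AnalyticAt ℂ g w := by
        by_contra hcon
        apply hw
        rw [hS, Set.Finite.mem_toFinset]
        constructor
        · by_cases hfw : AnalyticAt ℂ f w
          · exact Or.inr fun hgw => hcon ⟨hfw, hgw⟩
          · exact Or.inl hfw
        · exact hwK
      exact ⟨h, hanal w hwE.1 hwE.2, EventuallyEq.rfl⟩
  -- local removability everywhere, by periodicity
  have hloc : ∀ z : ℂ, ∃ ψ : ℂ → ℂ, AnalyticAt ℂ ψ z ∧ h =ᶠ[𝓝[≠] z] ψ := by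
    intro z
    obtain ⟨w, hwK, m, n, rfl⟩ := exists_rep ω₁ ω₂ hω z
    obtain ⟨ψ, hψan, hψeq⟩ := hlocK w hwK
    set lam : ℂ := (m : ℂ) * ω₁ + (n : ℂ) * ω₂ with hlam
    have hperiodic : ∀ y : ℂ, h (y - lam) = h y := by
      intro y
      conv_rhs => rw [show y = (y - lam) + lam by ring]
      exact (zperiodic hper1 hper2 m n (y - lam)).symm
    refine ⟨fun y => ψ (y - lam), ?_, ?_⟩
    · have hcomp : AnalyticAt ℂ (ψ ∘ fun y => y - lam) (w + lam) := by
        apply AnalyticAt.comp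
        · simpa using hψan
        · exact analyticAt_id.sub analyticAt_const
      exact hcomp
    · have hmap : Tendsto (fun y => y - lam) (𝓝[≠] (w + lam)) (𝓝[≠] w) := by
        rw [tendsto_nhdsWithin_iff]
        constructor
        · have : Tendsto (fun y => y - lam) (𝓝 (w + lam)) (𝓝 w) := by
            have := (continuous_sub_right lam).tendsto (w + lam)
            simpa using this
          exact this.mono_left nhdsWithin_le_nhds
        · filter_upwards [self_mem_nhdsWithin] with y hy
          intro hc
          apply hy
          have : y = w + lam := by
            have : y - lam = w := hc
            linear_combination this
          simpa using this
      have hev := hmap.eventually hψeq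
      filter_upwards [hev] with y hy
      rw [← hperiodic y, hy]
  -- conclude : h vanishes at all common analyticity points
  have hconst := pseudoLiouville hω hper1 hper2 hloc
  obtain ⟨Q, hQ0, hQeval⟩ := poly_of_coeffs c hc0
  refine ⟨Q, hQ0, ?_⟩
  intro u hfu hgu
  have : MvPolynomial.eval ![f u, g u] Q = h u := by
    rw [hQeval, hh]
    simp
  rw [this]
  rw [hconst u z₀ (hanal u hfu hgu) (hanal z₀ hz₀f hz₀g)]
  exact hz₀0
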